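/- Let (α, 𝒜) be a measurable space, 𝒯 a countable family of partial Borel automorphisms of α that is closed under inversion and under composition (restricted to the set where the composition is defined), and ν a finite measure on α quasi-invariant under 𝒯. Then there exists a measurable set X₀ ⊆ α with ν(α \ X₀) = 0, saturated under 𝒯, such that for every x ∈ X₀ and all τ₁ : S₁ → S₁', τ₂ : S₂ → S₂' in 𝒯 with x ∈ S₁ ∩ S₂ and τ₁(x) = τ₂(x), one has d[(τ₁⁻¹)_*ν]/dν(x) = d[(τ₂⁻¹)_*ν]/dν(x), where τᵢ⁻¹ : Sᵢ' → Sᵢ denotes the inverse partial Borel automorphism. -/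

import Mathlib

open MeasureTheory Set

/-- A partial Borel automorphism of a measurable space `α`: a bijection
`τ : source → target` between measurable subsets of `α`, measurable with
measurable inverse. -/
structure PartialBorelAut (α : Type*) [MeasurableSpace α] where
  source : Set α
  target : Set α
  toFun : α → α
  invFun : α → α
  source_measurable : MeasurableSet source
  target_measurable : MeasurableSet target
  mapsTo : MapsTo toFun source target
  inv_mapsTo : MapsTo invFun target source
  left_inv : ∀ x ∈ source, invFun (toFun x) = x
  right_inv : ∀ y ∈ target, toFun (invFun y) = y
  measurable_image : ∀ A : Set α, MeasurableSet A → A ⊆ source → MeasurableSet (toFun '' A)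
  measurable_image_inv : ∀ A : Set α, MeasurableSet A → A ⊆ target → MeasurableSet (invFun '' A)

namespace PartialBorelAut

variable {α : Type*} [MeasurableSpace α]

theorem injOn_invFun (τ : PartialBorelAut α) : InjOn τ.invFun τ.target := by
  intro a ha b hb h
  have h' := congrArg τ.toFun h
  rwa [τ.right_inv a ha, τ.right_inv b hb] at h'

/-- The pushforward `τ_*ν` under a partial Borel automorphism `τ` of (the restriction to
the source of) a measure `ν`: it is the measure `A ↦ ν (τ⁻¹ (A ∩ target))`, carried by
the target of `τ`. -/
noncomputable def pushforward (τ : PartialBorelAut α) (ν : Measure α) : Measure α :=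
  Measure.ofMeasurable (fun A _ => ν (τ.invFun '' (A ∩ τ.target)))
    (by simp)
    (by
      intro f hf hdisj
      have himg : ∀ i, MeasurableSet (τ.invFun '' (f i ∩ τ.target)) := fun i =>
        τ.measurable_image_inv _ ((hf i).inter τ.target_measurable) inter_subset_right
      have hdisj' : Pairwise (Function.onFun Disjoint fun i => τ.invFun '' (f i ∩ τ.target)) := by
        intro i j hij
        refine Set.disjoint_left.2 ?_
        rintro z ⟨a, ⟨haf, hat⟩, rfl⟩ ⟨b, ⟨hbf, hbt⟩, hba⟩
        have hab : b = a := τ.injOn_invFun hbt hat hba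
        exact Set.disjoint_left.1 (hdisj hij) haf (hab ▸ hbf)
      calc ν (τ.invFun '' ((⋃ i, f i) ∩ τ.target))
          = ν (⋃ i, τ.invFun '' (f i ∩ τ.target)) := by rw [iUnion_inter, image_iUnion]
        _ = ∑' i, ν (τ.invFun '' (f i ∩ τ.target)) := measure_iUnion hdisj' himg)

/-- The inverse of a partial Borel automorphism. -/
def symm (τ : PartialBorelAut α) : PartialBorelAut α where
  source := τ.target
  target := τ.source
  toFun := τ.invFun
  invFun := τ.toFun
  source_measurable := τ.target_measurable
  target_measurable := τ.source_measurable
  mapsTo := τ.inv_mapsTo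
  inv_mapsTo := τ.mapsTo
  left_inv := τ.right_inv
  right_inv := τ.left_inv
  measurable_image := τ.measurable_image_inv
  measurable_image_inv := τ.measurable_image

end PartialBorelAut

/-- Quasi-invariance of a measure under a family of partial Borel automorphisms. -/
def QuasiInvariant {α : Type*} [MeasurableSpace α]
    (𝒯 : Set (PartialBorelAut α)) (ν : Measure α) : Prop :=
  ∀ τ ∈ 𝒯, ∀ A : Set α, MeasurableSet A → A ⊆ τ.source → (ν A = 0 ↔ ν (τ.toFun '' A) = 0)

/-- Saturation of a set under a family of partial Borel automorphisms. -/
def Saturated {α : Type*} [MeasurableSpace α]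
    (𝒯 : Set (PartialBorelAut α)) (Y : Set α) : Prop :=
  ∀ τ ∈ 𝒯, τ.toFun '' (Y ∩ τ.source) ⊆ Y ∧ τ.invFun '' (Y ∩ τ.target) ⊆ Y

/-- The family `𝒯` is closed under inversion. -/
def ClosedUnderInv {α : Type*} [MeasurableSpace α] (𝒯 : Set (PartialBorelAut α)) : Prop :=
  ∀ τ ∈ 𝒯, τ.symm ∈ 𝒯

/-- The family `𝒯` is closed under composition, restricted to the set where the
composition is defined. -/
def ClosedUnderComp {α : Type*} [MeasurableSpace α] (𝒯 : Set (PartialBorelAut α)) : Prop :=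
  ∀ τ₁ ∈ 𝒯, ∀ τ₂ ∈ 𝒯, ∃ σ ∈ 𝒯,
    σ.source = {x ∈ τ₁.source | τ₁.toFun x ∈ τ₂.source} ∧
    ∀ x ∈ σ.source, σ.toFun x = τ₂.toFun (τ₁.toFun x)


open scoped ENNReal NNReal

namespace PartialBorelAut

variable {α : Type*} [MeasurableSpace α]

lemma pushforward_apply (τ : PartialBorelAut α) (ν : Measure α) {A : Set α}
    (hA : MeasurableSet A) : τ.pushforward ν A = ν (τ.invFun '' (A ∩ τ.target)) :=
  Measure.ofMeasurable_apply A hA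

lemma symm_pushforward_apply (τ : PartialBorelAut α) (ν : Measure α) {A : Set α}
    (hA : MeasurableSet A) : τ.symm.pushforward ν A = ν (τ.toFun '' (A ∩ τ.source)) :=
  Measure.ofMeasurable_apply A hA

instance pushforward_finite (τ : PartialBorelAut α) (ν : Measure α) [IsFiniteMeasure ν] :
    IsFiniteMeasure (τ.pushforward ν) := by
  constructor
  rw [τ.pushforward_apply ν MeasurableSet.univ]
  exact (measure_lt_top ν _)

lemma symm_pushforward_absCont (τ : PartialBorelAut α) (ν : Measure α)
    (h : ∀ A : Set α, MeasurableSet A → A ⊆ τ.source → (ν A = 0 ↔ ν (τ.toFun '' A) = 0)) :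
    τ.symm.pushforward ν ≪ ν := by
  refine Measure.AbsolutelyContinuous.mk fun A hA hν => ?_
  rw [τ.symm_pushforward_apply ν hA]
  exact (h (A ∩ τ.source) (hA.inter τ.source_measurable) inter_subset_right).mp
    (measure_mono_null inter_subset_left hν)

end PartialBorelAut

/-- Core lemma: iteration argument. -/
lemma ghys_core {α : Type*} [MeasurableSpace α] (ν : Measure α) [IsFiniteMeasure ν]
    (τ₁ τ₂ σ : PartialBorelAut α)
    (h₁ : τ₁.symm.pushforward ν ≪ ν) (h₂ : τ₂.symm.pushforward ν ≪ ν)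
    (hσs : σ.source = {x ∈ τ₁.source | τ₁.toFun x ∈ τ₂.target})
    (hσf : ∀ x ∈ σ.source, σ.toFun x = τ₂.invFun (τ₁.toFun x))
    (q r : ℝ≥0∞) (hqr : q < r) :
    ν {x | (x ∈ σ.source ∧ σ.toFun x = x) ∧
        (τ₂.symm.pushforward ν).rnDeriv ν x ≤ q ∧
        r ≤ (τ₁.symm.pushforward ν).rnDeriv ν x} = 0 := by
  set f₁ := (τ₁.symm.pushforward ν).rnDeriv ν with hf₁
  set f₂ := (τ₂.symm.pushforward ν).rnDeriv ν with hf₂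
  set F : Set α := {x | (x ∈ σ.source ∧ σ.toFun x = x) ∧ f₂ x ≤ q ∧ r ≤ f₁ x} with hF
  by_contra hFne
  set G : Set α := {x | f₂ x ≤ q ∧ r ≤ f₁ x} with hG
  have hGm : MeasurableSet G :=
    ((Measure.measurable_rnDeriv _ _) measurableSet_Iic).inter
      ((Measure.measurable_rnDeriv _ _) measurableSet_Ici)
  set H0 : Set α := G ∩ σ.source with hH0
  let Hseq : ℕ → Set α := fun n =>
    Nat.rec H0 (fun _ Hn => Hn ∩ σ.toFun '' Hn ∩ σ.invFun '' (Hn ∩ σ.target)) n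
  have hstep : ∀ n, Hseq (n + 1) =
      Hseq n ∩ σ.toFun '' Hseq n ∩ σ.invFun '' (Hseq n ∩ σ.target) := fun n => rfl
  have hprops : ∀ n, MeasurableSet (Hseq n) ∧ Hseq n ⊆ H0 := by
    intro n
    induction n with
    | zero => exact ⟨hGm.inter σ.source_measurable, subset_rfl⟩
    | succ n ih =>
      have hs : Hseq n ⊆ σ.source := ih.2.trans inter_subset_right
      refine ⟨(ih.1.inter (σ.measurable_image _ ih.1 hs)).inter
        (σ.measurable_image_inv _ (ih.1.inter σ.target_measurable) inter_subset_right), ?_⟩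
      rw [hstep n]
      exact (inter_subset_left.trans inter_subset_left).trans ih.2
  have hHsrc : ∀ n, Hseq n ⊆ σ.source := fun n => (hprops n).2.trans inter_subset_right
  have hFsub : ∀ n, F ⊆ Hseq n := by
    intro n
    induction n with
    | zero => exact fun x hx => ⟨hx.2, hx.1.1⟩
    | succ n ih =>
      intro x hx
      have hxs : x ∈ σ.source := hx.1.1
      have hfix : σ.toFun x = x := hx.1.2
      rw [hstep n]
      refine ⟨⟨ih hx, ⟨x, ih hx, hfix⟩⟩, ⟨x, ⟨ih hx, ?_⟩, ?_⟩⟩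
      · have := σ.mapsTo hxs; rwa [hfix] at this
      · have := σ.left_inv x hxs; rwa [hfix] at this
  set K : Set α := ⋂ n, Hseq n with hK
  have hKm : MeasurableSet K := MeasurableSet.iInter fun n => (hprops n).1
  have hFK : F ⊆ K := subset_iInter hFsub
  have hKsrc : K ⊆ σ.source := (iInter_subset _ 0).trans (hHsrc 0)
  have hKG : K ⊆ G := (iInter_subset _ 0).trans ((hprops 0).2.trans inter_subset_left)
  -- forward stability
  have hfwd : ∀ x ∈ K, σ.toFun x ∈ K := by
    intro x hx
    rw [hK, mem_iInter] at hx ⊢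
    intro n
    have h := hx (n + 1)
    rw [hstep n] at h
    obtain ⟨z, ⟨hz, hzt⟩, hzx⟩ := h.2
    have hz' : σ.toFun x = z := by rw [← hzx, σ.right_inv z hzt]
    rwa [hz']
  have hbwd : ∀ x ∈ K, σ.invFun x ∈ K ∧ σ.toFun (σ.invFun x) = x := by
    intro x hx
    have hw : ∀ n, ∃ y ∈ Hseq n, σ.toFun y = x := by
      intro n
      have h := (mem_iInter.1 hx) (n + 1)
      rw [hstep n] at h
      obtain ⟨y, hy, hyx⟩ := h.1.2
      exact ⟨y, hy, hyx⟩
    obtain ⟨y0, hy0, hy0x⟩ := hw 0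
    have hinv0 : σ.invFun x = y0 := by rw [← hy0x, σ.left_inv y0 (hHsrc 0 hy0)]
    constructor
    · rw [mem_iInter]
      intro n
      obtain ⟨y, hy, hyx⟩ := hw n
      have : σ.invFun x = y := by rw [← hyx, σ.left_inv y (hHsrc n hy)]
      rwa [this]
    · rw [hinv0, hy0x]
  have hKeq : σ.toFun '' K = K := by
    apply Subset.antisymm
    · rintro _ ⟨x, hx, rfl⟩; exact hfwd x hx
    · intro x hx; exact ⟨σ.invFun x, (hbwd x hx).1, (hbwd x hx).2⟩
  have hK1 : K ⊆ τ₁.source := fun x hx => by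
    have := hKsrc hx; rw [hσs] at this; exact this.1
  have hK2 : K ⊆ τ₂.source := by
    intro x hx
    obtain ⟨y, hy, rfl⟩ := hKeq.symm.subset hx
    have hysrc := hKsrc hy
    have hyt : τ₁.toFun y ∈ τ₂.target := by
      have := hysrc; rw [hσs] at this; exact this.2
    rw [hσf y hysrc]
    exact τ₂.inv_mapsTo hyt
  have himgeq : τ₁.toFun '' K = τ₂.toFun '' K := by
    apply Subset.antisymm
    · rintro _ ⟨x, hx, rfl⟩
      have hxsrc := hKsrc hx
      have hxt : τ₁.toFun x ∈ τ₂.target := by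
        have := hxsrc; rw [hσs] at this; exact this.2
      refine ⟨σ.toFun x, hfwd x hx, ?_⟩
      rw [hσf x hxsrc, τ₂.right_inv _ hxt]
    · rintro _ ⟨x, hx, rfl⟩
      obtain ⟨y, hy, rfl⟩ := hKeq.symm.subset hx
      have hysrc := hKsrc hy
      have hyt : τ₁.toFun y ∈ τ₂.target := by
        have := hysrc; rw [hσs] at this; exact this.2
      refine ⟨y, hy, ?_⟩
      rw [hσf y hysrc, τ₂.right_inv _ hyt]
  have hμ₁K : τ₁.symm.pushforward ν K = ν (τ₁.toFun '' K) := by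
    rw [τ₁.symm_pushforward_apply ν hKm, inter_eq_self_of_subset_left hK1]
  have hμ₂K : τ₂.symm.pushforward ν K = ν (τ₂.toFun '' K) := by
    rw [τ₂.symm_pushforward_apply ν hKm, inter_eq_self_of_subset_left hK2]
  have hμeq : τ₁.symm.pushforward ν K = τ₂.symm.pushforward ν K := by
    rw [hμ₁K, hμ₂K, himgeq]
  have hi₁ : ∫⁻ x in K, f₁ x ∂ν = τ₁.symm.pushforward ν K :=
    Measure.setLIntegral_rnDeriv' h₁ hKm
  have hi₂ : ∫⁻ x in K, f₂ x ∂ν = τ₂.symm.pushforward ν K :=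
    Measure.setLIntegral_rnDeriv' h₂ hKm
  have hb₁ : r * ν K ≤ ∫⁻ x in K, f₁ x ∂ν := by
    rw [← setLIntegral_const K r]
    exact setLIntegral_mono' hKm fun x hx => (hKG hx).2
  have hb₂ : ∫⁻ x in K, f₂ x ∂ν ≤ q * ν K := by
    rw [← setLIntegral_const K q]
    exact setLIntegral_mono' hKm fun x hx => (hKG hx).1
  have hle : r * ν K ≤ q * ν K := by
    calc r * ν K ≤ ∫⁻ x in K, f₁ x ∂ν := hb₁
      _ = τ₂.symm.pushforward ν K := by rw [hi₁, hμeq]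
      _ = ∫⁻ x in K, f₂ x ∂ν := hi₂.symm
      _ ≤ q * ν K := hb₂
  have hKpos : ν K ≠ 0 := fun h => hFne (measure_mono_null hFK h)
  have hlt : q * ν K < r * ν K :=
    ENNReal.mul_lt_mul_left hKpos (measure_ne_top ν K) hqr
  exact absurd hle (not_le.2 hlt)

/-- One-sided comparison on the coincidence set is null. -/
lemma ghys_oneSided {α : Type*} [MeasurableSpace α] (ν : Measure α) [IsFiniteMeasure ν]
    (𝒯 : Set (PartialBorelAut α)) (hinv : ClosedUnderInv 𝒯) (hcomp : ClosedUnderComp 𝒯)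
    (hqi : QuasiInvariant 𝒯 ν) {τ₁ τ₂ : PartialBorelAut α} (hτ₁ : τ₁ ∈ 𝒯) (hτ₂ : τ₂ ∈ 𝒯) :
    ν {x | (x ∈ τ₁.source ∧ x ∈ τ₂.source) ∧ τ₁.toFun x = τ₂.toFun x ∧
        (τ₂.symm.pushforward ν).rnDeriv ν x < (τ₁.symm.pushforward ν).rnDeriv ν x} = 0 := by
  obtain ⟨σ, hσ𝒯, hσs, hσf⟩ := hcomp τ₁ hτ₁ τ₂.symm (hinv τ₂ hτ₂)
  have hσs' : σ.source = {x ∈ τ₁.source | τ₁.toFun x ∈ τ₂.target} := hσs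
  have hσf' : ∀ x ∈ σ.source, σ.toFun x = τ₂.invFun (τ₁.toFun x) := hσf
  have h₁ : τ₁.symm.pushforward ν ≪ ν := τ₁.symm_pushforward_absCont ν (hqi τ₁ hτ₁)
  have h₂ : τ₂.symm.pushforward ν ≪ ν := τ₂.symm_pushforward_absCont ν (hqi τ₂ hτ₂)
  set f₁ := (τ₁.symm.pushforward ν).rnDeriv ν
  set f₂ := (τ₂.symm.pushforward ν).rnDeriv ν
  set F : ℚ × ℚ → Set α := fun p =>
    {x | ((x ∈ σ.source ∧ σ.toFun x = x) ∧
      f₂ x ≤ ENNReal.ofReal (p.1:ℝ) ∧ ENNReal.ofReal (p.2:ℝ) ≤ f₁ x) ∧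
      ENNReal.ofReal (p.1:ℝ) < ENNReal.ofReal (p.2:ℝ)} with hFdef
  have hsub : {x | (x ∈ τ₁.source ∧ x ∈ τ₂.source) ∧ τ₁.toFun x = τ₂.toFun x ∧ f₂ x < f₁ x}
      ⊆ ⋃ p : ℚ × ℚ, F p := by
    rintro x ⟨⟨hs1, hs2⟩, heq, hlt⟩
    have hσx : x ∈ σ.source := by
      rw [hσs']
      exact ⟨hs1, heq ▸ τ₂.mapsTo hs2⟩
    have hfix : σ.toFun x = x := by
      rw [hσf' x hσx, heq]
      exact τ₂.left_inv x hs2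
    obtain ⟨p1, _, hq1, hq2⟩ := ENNReal.lt_iff_exists_rat_btwn.1 hlt
    obtain ⟨p2, _, hr1, hr2⟩ := ENNReal.lt_iff_exists_rat_btwn.1 hq2
    exact mem_iUnion.2 ⟨(p1, p2), ⟨⟨hσx, hfix⟩, hq1.le, hr2.le⟩, hr1⟩
  refine measure_mono_null hsub (measure_iUnion_null fun p => ?_)
  by_cases hp : ENNReal.ofReal (p.1:ℝ) < ENNReal.ofReal (p.2:ℝ)
  · exact measure_mono_null (fun x hx => hx.1)
      (ghys_core ν τ₁ τ₂ σ h₁ h₂ hσs' hσf' _ _ hp)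
  · exact measure_mono_null (fun x hx => (hp hx.2).elim) (measure_empty (μ := ν))


/-- **Ghys' lemma (cocycle form).** For a finite measure `ν` quasi-invariant under a
countable family `𝒯` of partial Borel automorphisms closed under inversion and
composition, there is a measurable saturated set `X₀` of full measure such that at every
`x ∈ X₀`, for any two elements `τ₁, τ₂ ∈ 𝒯` defined at `x` with `τ₁ x = τ₂ x`, the
Radon–Nikodym derivatives `d[(τ₁⁻¹)_*ν]/dν` and `d[(τ₂⁻¹)_*ν]/dν` agree at `x`. -/
theorem ghys_lemma_cocycle
    {α : Type*} [MeasurableSpace α] (ν : Measure α) [IsFiniteMeasure ν]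
    (𝒯 : Set (PartialBorelAut α)) (hcount : 𝒯.Countable)
    (hinv : ClosedUnderInv 𝒯) (hcomp : ClosedUnderComp 𝒯)
    (hqi : QuasiInvariant 𝒯 ν) :
    ∃ X₀ : Set α, MeasurableSet X₀ ∧ ν X₀ᶜ = 0 ∧ Saturated 𝒯 X₀ ∧
      ∀ x ∈ X₀, ∀ τ₁ ∈ 𝒯, ∀ τ₂ ∈ 𝒯, x ∈ τ₁.source → x ∈ τ₂.source →
        τ₁.toFun x = τ₂.toFun x →
        (τ₁.symm.pushforward ν).rnDeriv ν x = (τ₂.symm.pushforward ν).rnDeriv ν x := by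
  classical
  set Bad : Set α := ⋃ τ₁ ∈ 𝒯, ⋃ τ₂ ∈ 𝒯,
    {x | (x ∈ τ₁.source ∧ x ∈ τ₂.source) ∧ τ₁.toFun x = τ₂.toFun x ∧
      (τ₁.symm.pushforward ν).rnDeriv ν x ≠ (τ₂.symm.pushforward ν).rnDeriv ν x} with hBadDef
  have hBad : ν Bad = 0 := by
    refine (measure_biUnion_null_iff hcount).2 fun τ₁ hτ₁ =>
      (measure_biUnion_null_iff hcount).2 fun τ₂ hτ₂ => ?_
    have hsub : {x | (x ∈ τ₁.source ∧ x ∈ τ₂.source) ∧ τ₁.toFun x = τ₂.toFun x ∧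
        (τ₁.symm.pushforward ν).rnDeriv ν x ≠ (τ₂.symm.pushforward ν).rnDeriv ν x} ⊆
        {x | (x ∈ τ₁.source ∧ x ∈ τ₂.source) ∧ τ₁.toFun x = τ₂.toFun x ∧
          (τ₂.symm.pushforward ν).rnDeriv ν x < (τ₁.symm.pushforward ν).rnDeriv ν x} ∪
        {x | (x ∈ τ₂.source ∧ x ∈ τ₁.source) ∧ τ₂.toFun x = τ₁.toFun x ∧
          (τ₁.symm.pushforward ν).rnDeriv ν x < (τ₂.symm.pushforward ν).rnDeriv ν x} := by
      rintro x ⟨⟨hs1, hs2⟩, heq, hne⟩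
      rcases lt_or_gt_of_ne hne with h | h
      · exact Or.inr ⟨⟨hs2, hs1⟩, heq.symm, h⟩
      · exact Or.inl ⟨⟨hs1, hs2⟩, heq, h⟩
    exact measure_mono_null hsub (measure_union_null
      (ghys_oneSided ν 𝒯 hinv hcomp hqi hτ₁ hτ₂)
      (ghys_oneSided ν 𝒯 hinv hcomp hqi hτ₂ hτ₁))
  set N : Set α := toMeasurable ν Bad with hNdef
  have hNm : MeasurableSet N := measurableSet_toMeasurable ν Bad
  have hNnull : ν N = 0 := by rw [hNdef, measure_toMeasurable]; exact hBad
  set M : Set α := N ∪ ⋃ τ ∈ 𝒯, τ.toFun '' (N ∩ τ.source) with hMdef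
  have hMm : MeasurableSet M :=
    hNm.union (MeasurableSet.biUnion hcount fun τ _ =>
      τ.measurable_image _ (hNm.inter τ.source_measurable) inter_subset_right)
  have hMnull : ν M = 0 := by
    refine measure_union_null hNnull ((measure_biUnion_null_iff hcount).2 fun τ hτ => ?_)
    exact (hqi τ hτ _ (hNm.inter τ.source_measurable) inter_subset_right).1
      (measure_mono_null inter_subset_left hNnull)
  have hNM : N ⊆ M := subset_union_left
  have key : ∀ τ ∈ 𝒯, τ.toFun '' (Mᶜ ∩ τ.source) ⊆ Mᶜ := by
    rintro τ hτ _ ⟨x, ⟨hxM, hxs⟩, rfl⟩ hmem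
    rcases hmem with hN | hU
    · refine hxM (Or.inr (mem_biUnion (hinv τ hτ) ?_))
      exact ⟨τ.toFun x, ⟨hN, τ.mapsTo hxs⟩, τ.left_inv x hxs⟩
    · rw [mem_iUnion₂] at hU
      obtain ⟨ρ, hρ, y, ⟨hyN, hyρ⟩, hρy⟩ := hU
      obtain ⟨σ, hσ𝒯, hσs, hσf⟩ := hcomp ρ hρ τ.symm (hinv τ hτ)
      have hyσ : y ∈ σ.source := by
        rw [hσs]
        exact ⟨hyρ, show ρ.toFun y ∈ τ.target from hρy ▸ τ.mapsTo hxs⟩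
      have hσyx : σ.toFun y = x := by
        rw [hσf y hyσ]
        show τ.invFun (ρ.toFun y) = x
        rw [hρy]
        exact τ.left_inv x hxs
      exact hxM (Or.inr (mem_biUnion hσ𝒯 ⟨y, ⟨hyN, hyσ⟩, hσyx⟩))
  refine ⟨Mᶜ, hMm.compl, by rwa [compl_compl], fun τ hτ => ⟨key τ hτ, key τ.symm (hinv τ hτ)⟩,
    ?_⟩
  intro x hx τ₁ hτ₁ τ₂ hτ₂ hs1 hs2 heq
  by_contra hne
  exact hx (hNM (subset_toMeasurable ν Bad
    (mem_biUnion hτ₁ (mem_biUnion hτ₂ ⟨⟨hs1, hs2⟩, heq, hne⟩))))
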